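/- arXiv:1602.07025 — 4 statements merged into one kernel-verified Lean document; each statement's English description precedes it below -/
import Mathlib

section
/- Let 𝔬 be a discrete valuation ring (not a field) with uniformizer π and fraction field K, let n ≥ 1, let w : {1,…,n} → ℕ, and let δ ∈ Mat_n(𝔬) be the diagonal matrix with entries π^{w(i)}. Let C₁,…,C_d ∈ Mat_n(𝔬) satisfy δ·C_k = π·(C_k·δ) for every k. For M ∈ Mat_n(𝔬) with det M ≠ 0, call M stable if Λ(M)·C_k ⊆ Λ(M) for all k, where Λ(M) ⊆ 𝔬ⁿ is the 𝔬-span of the rows of M and row vectors act by right multiplication. Then there exists a unique m̃₁ ∈ ℕ₀ such that for every m ∈ ℕ₀, the matrix M·δ^m is stable if and only if m ≥ m̃₁. Moreover, for every a ∈ ℕ₀ such that π^a·M⁻¹ has all its entries in 𝔬, one has m̃₁ ≤ a. -/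
open scoped Matrix

/-- The `𝔬`-span of the rows of a square matrix, i.e. the lattice `Λ(M)`. -/
def rowSpan {𝔬 : Type} [CommRing 𝔬] {n : ℕ} (M : Matrix (Fin n) (Fin n) 𝔬) :
    Submodule 𝔬 (Fin n → 𝔬) :=
  Submodule.span 𝔬 (Set.range fun i => M i)

/-- `M` is stable (for the right actions of `C₁, …, C_d`) if `Λ(M)·C_k ⊆ Λ(M)`
for all `k`. -/
def IsStableMat {𝔬 : Type} [CommRing 𝔬] {n d : ℕ}
    (C : Fin d → Matrix (Fin n) (Fin n) 𝔬) (M : Matrix (Fin n) (Fin n) 𝔬) : Prop :=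
  ∀ k, ∀ v ∈ rowSpan M, v ᵥ* C k ∈ rowSpan M

lemma mem_rowSpan_iff {𝔬 : Type} [CommRing 𝔬] {n : ℕ} (M : Matrix (Fin n) (Fin n) 𝔬)
    (v : Fin n → 𝔬) : v ∈ rowSpan M ↔ ∃ w : Fin n → 𝔬, w ᵥ* M = v := by
  have h : rowSpan M = LinearMap.range M.vecMulLinear := by
    rw [range_vecMulLinear]; rfl
  rw [h]
  constructor
  · rintro ⟨w, rfl⟩; exact ⟨w, rfl⟩
  · rintro ⟨w, rfl⟩; exact ⟨w, rfl⟩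

lemma vecMul_smulMat {𝔬 : Type} [CommRing 𝔬] {n : ℕ} (c : 𝔬) (v : Fin n → 𝔬)
    (A : Matrix (Fin n) (Fin n) 𝔬) : v ᵥ* (c • A) = c • (v ᵥ* A) := by
  ext j
  simp [Matrix.vecMul, dotProduct, Finset.mul_sum, mul_left_comm]

/-- existence (and uniqueness) of the distance invariant `m̃₁`. -/
theorem exists_unique_stability_threshold {𝔬 : Type} [CommRing 𝔬] [IsDomain 𝔬]
    [IsDiscreteValuationRing 𝔬] (π : 𝔬) (hπ : Irreducible π) (n d : ℕ) (hn : 1 ≤ n)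
    (w : Fin n → ℕ) (δ : Matrix (Fin n) (Fin n) 𝔬)
    (hδ : δ = Matrix.diagonal fun i => π ^ w i)
    (C : Fin d → Matrix (Fin n) (Fin n) 𝔬)
    (hC : ∀ k, δ * C k = π • (C k * δ))
    (M : Matrix (Fin n) (Fin n) 𝔬) (hM : M.det ≠ 0) :
    ∃ m₁ : ℕ,
      (∀ m : ℕ, IsStableMat C (M * δ ^ m) ↔ m₁ ≤ m) ∧
      (∀ m₁' : ℕ, (∀ m : ℕ, IsStableMat C (M * δ ^ m) ↔ m₁' ≤ m) → m₁' = m₁) ∧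
      (∀ a : ℕ,
        (∀ i j, ∃ x : 𝔬, algebraMap 𝔬 (FractionRing 𝔬) x =
            algebraMap 𝔬 (FractionRing 𝔬) π ^ a *
              (M.map (algebraMap 𝔬 (FractionRing 𝔬)))⁻¹ i j) →
        m₁ ≤ a) := by
  classical
  -- δ^m * C k = π^m • (C k * δ^m)
  have hδC : ∀ (k) (m : ℕ), δ ^ m * C k = π ^ m • (C k * δ ^ m) := by
    intro k m
    induction m with
    | zero => simp
    | succ m ih =>
        calc δ ^ (m + 1) * C k = δ ^ m * (δ * C k) := by rw [pow_succ, Matrix.mul_assoc]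
          _ = δ ^ m * (π • (C k * δ)) := by rw [hC k]
          _ = π • (δ ^ m * C k * δ) := by rw [Matrix.mul_smul, Matrix.mul_assoc]
          _ = π • ((π ^ m • (C k * δ ^ m)) * δ) := by rw [ih]
          _ = π ^ (m + 1) • (C k * δ ^ (m + 1)) := by
              rw [Matrix.smul_mul, smul_smul, Matrix.mul_assoc, ← pow_succ, ← pow_succ']
  -- stability is preserved when multiplying by δ
  have hmono : ∀ m : ℕ, IsStableMat C (M * δ ^ m) → IsStableMat C (M * δ ^ (m + 1)) := by
    intro m hst k v hv
    rw [mem_rowSpan_iff] at hv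
    obtain ⟨u, hu⟩ := hv
    have hu' : (u ᵥ* (M * δ ^ m)) ᵥ* δ = v := by
      rw [Matrix.vecMul_vecMul, Matrix.mul_assoc, ← pow_succ, hu]
    set x : Fin n → 𝔬 := u ᵥ* (M * δ ^ m) with hx
    have hxmem : x ∈ rowSpan (M * δ ^ m) := by
      rw [mem_rowSpan_iff]; exact ⟨u, rfl⟩
    have hxC : x ᵥ* C k ∈ rowSpan (M * δ ^ m) := hst k x hxmem
    rw [mem_rowSpan_iff] at hxC
    obtain ⟨y, hy⟩ := hxC
    have : v ᵥ* C k = π • ((x ᵥ* C k) ᵥ* δ) := by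
      calc v ᵥ* C k = (x ᵥ* δ) ᵥ* C k := by rw [hu']
        _ = x ᵥ* (δ * C k) := Matrix.vecMul_vecMul _ _ _
        _ = x ᵥ* (π • (C k * δ)) := by rw [hC k]
        _ = π • (x ᵥ* (C k * δ)) := vecMul_smulMat _ _ _
        _ = π • ((x ᵥ* C k) ᵥ* δ) := by
            congr 1; exact (Matrix.vecMul_vecMul _ _ _).symm
    rw [this, ← hy, Matrix.vecMul_vecMul, Matrix.mul_assoc, ← pow_succ]
    exact Submodule.smul_mem _ π (by rw [mem_rowSpan_iff]; exact ⟨y, rfl⟩)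
  have hup : ∀ m m' : ℕ, m ≤ m' → IsStableMat C (M * δ ^ m) → IsStableMat C (M * δ ^ m') := by
    intro m m' hle hst
    induction m' , hle using Nat.le_induction with
    | base => exact hst
    | succ m' hle ih => exact hmono m' ih
  -- base stability from π^a • v ∈ rowSpan M
  have hbase : ∀ a : ℕ, (∀ v : Fin n → 𝔬, π ^ a • v ∈ rowSpan M) →
      IsStableMat C (M * δ ^ a) := by
    intro a ha k v hv
    rw [mem_rowSpan_iff] at hv
    obtain ⟨u, hu⟩ := hv
    have hkey : v ᵥ* C k = (π ^ a • ((u ᵥ* M) ᵥ* C k)) ᵥ* δ ^ a := by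
      calc v ᵥ* C k = u ᵥ* (M * (δ ^ a * C k)) := by
            rw [← hu, Matrix.vecMul_vecMul, Matrix.mul_assoc]
        _ = u ᵥ* (M * (π ^ a • (C k * δ ^ a))) := by rw [hδC k a]
        _ = π ^ a • (u ᵥ* (M * (C k * δ ^ a))) := by
            rw [Matrix.mul_smul, vecMul_smulMat]
        _ = π ^ a • (((u ᵥ* M) ᵥ* C k) ᵥ* δ ^ a) := by
            rw [Matrix.vecMul_vecMul, Matrix.vecMul_vecMul]
        _ = (π ^ a • ((u ᵥ* M) ᵥ* C k)) ᵥ* δ ^ a := by rw [Matrix.smul_vecMul]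
    have hmem : π ^ a • ((u ᵥ* M) ᵥ* C k) ∈ rowSpan M := ha _
    rw [mem_rowSpan_iff] at hmem
    obtain ⟨y, hy⟩ := hmem
    rw [hkey, ← hy, Matrix.vecMul_vecMul]
    rw [mem_rowSpan_iff]; exact ⟨y, rfl⟩
  -- nonemptiness via adjugate
  have hne : ∃ t : ℕ, ∀ v : Fin n → 𝔬, π ^ t • v ∈ rowSpan M := by
    obtain ⟨t, u, hu⟩ := IsDiscreteValuationRing.associated_pow_irreducible hM hπ
    refine ⟨t, fun v => ?_⟩
    have h2 : ((u : 𝔬) • M.adjugate) * M = π ^ t • (1 : Matrix (Fin n) (Fin n) 𝔬) := by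
      rw [Matrix.smul_mul, Matrix.adjugate_mul, smul_smul, mul_comm, hu]
    have h1 : π ^ t • v = (v ᵥ* ((u : 𝔬) • M.adjugate)) ᵥ* M := by
      rw [Matrix.vecMul_vecMul, h2, vecMul_smulMat, Matrix.vecMul_one]
    rw [h1, mem_rowSpan_iff]
    exact ⟨_, rfl⟩
  obtain ⟨t, ht⟩ := hne
  set S : Set ℕ := {m | IsStableMat C (M * δ ^ m)} with hS
  have hSne : S.Nonempty := ⟨t, hbase t ht⟩
  refine ⟨sInf S, ?_, ?_, ?_⟩
  · intro m
    constructor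
    · intro hst; exact Nat.sInf_le hst
    · intro hle; exact hup (sInf S) m hle (Nat.sInf_mem hSne)
  · intro m₁' h
    have h1 : m₁' ≤ sInf S := (h (sInf S)).mp (Nat.sInf_mem hSne)
    have h2 : sInf S ≤ m₁' := Nat.sInf_le ((h m₁').mpr le_rfl)
    omega
  · intro a ha
    -- build integral matrix N with N * M = π^a • 1
    set f := algebraMap 𝔬 (FractionRing 𝔬) with hf
    have hinj : Function.Injective f := IsFractionRing.injective 𝔬 (FractionRing 𝔬)
    set N : Matrix (Fin n) (Fin n) 𝔬 := fun i j => (ha i j).choose with hN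
    have hNmap : ∀ i j, f (N i j) = f π ^ a * (M.map f)⁻¹ i j := fun i j => (ha i j).choose_spec
    have hdet : IsUnit ((M.map f).det) := by
      rw [← RingHom.mapMatrix_apply, ← RingHom.map_det]
      exact (isUnit_iff_ne_zero).2 (fun h => hM (hinj (by simpa using h)))
    have hNM : N * M = (π ^ a) • (1 : Matrix (Fin n) (Fin n) 𝔬) := by
      apply Matrix.map_injective hinj (f := f)
      show (N * M).map f = ((π ^ a) • (1 : Matrix (Fin n) (Fin n) 𝔬)).map f
      rw [Matrix.map_mul]
      have : N.map f = (f π ^ a) • (M.map f)⁻¹ := by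
        ext i j; simp [Matrix.map_apply, hNmap i j]
      rw [this, Matrix.smul_mul, Matrix.nonsing_inv_mul _ hdet]
      ext i j
      simp [Matrix.map_apply, Matrix.smul_apply, Matrix.one_apply, map_pow]
      split <;> simp
    have hva : ∀ v : Fin n → 𝔬, π ^ a • v ∈ rowSpan M := by
      intro v
      have : π ^ a • v = (v ᵥ* N) ᵥ* M := by
        rw [Matrix.vecMul_vecMul, hNM, vecMul_smulMat, Matrix.vecMul_one]
      rw [this, mem_rowSpan_iff]
      exact ⟨_, rfl⟩
    exact Nat.sInf_le (hbase a hva)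
end

section
/- Let 𝔬 be a discrete valuation ring with maximal ideal generated by π, residue field k, and normalized valuation v; for a matrix A over 𝔬 let v(A) denote the minimum of the valuations of its entries. Let c ≥ 1 and n₁,…,n_c ≥ 1 with n = n₁+⋯+n_c, partition {1,…,n} into consecutive blocks B₁,…,B_c of sizes n₁,…,n_c, and let b(i) denote the index of the block containing i. Let C₁,…,C_d ∈ Mat_n(𝔬) satisfy (C_k)_{ij} = 0 unless b(j) = b(i)+1, and let δ be the diagonal matrix with entries δ_{ii} = π^{c−b(i)}. Assume that every row vector x ∈ kⁿ with x·C̄_k = 0 for all k (where C̄_k is the reduction of C_k modulo π) is supported on the last block B_c, i.e. {x ∈ kⁿ : x·C̄_k = 0 for all k} equals the k-span of the standard basis vectors e_i with i ∈ B_c. Then for every M ∈ Mat_n(𝔬) with det M ≠ 0 whose row span Λ(M) ⊆ 𝔬ⁿ satisfies Λ(M)·C_k ⊆ Λ(M) for all k, one has v(M) = v(M·δ). -/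
open scoped Matrix

/-- for a DVR `𝔬`, block data `B₁,…,B_c`, matrices `C_k` supported on
the first block superdiagonal, `δ = diag(π^{c−b(i)})`, and the hypothesis that the
common left kernel of the reductions `C̄_k` is spanned by the standard basis vectors
of the last block, every `M` with `det M ≠ 0` whose row span is stable under all
`C_k` satisfies `v(M) = v(M·δ)` (expressed via divisibility of all entries by
powers of the uniformizer `π`). -/
theorem valuation_eq_of_stable {𝔬 : Type} [CommRing 𝔬] [IsDomain 𝔬]
    [IsDiscreteValuationRing 𝔬] (π : 𝔬) (hπ : Irreducible π)
    (c : ℕ) (hc : 1 ≤ c) (nsz : Fin c → ℕ) (hnsz : ∀ i, 1 ≤ nsz i) (d : ℕ)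
    (C : Fin d → Matrix ((i : Fin c) × Fin (nsz i)) ((i : Fin c) × Fin (nsz i)) 𝔬)
    (hC : ∀ k x y, ((y : (i : Fin c) × Fin (nsz i)).1.val ≠ (x : (i : Fin c) × Fin (nsz i)).1.val + 1) → C k x y = 0)
    (δ : Matrix ((i : Fin c) × Fin (nsz i)) ((i : Fin c) × Fin (nsz i)) 𝔬)
    (hδ : δ = Matrix.diagonal fun x => π ^ (c - (x.1.val + 1)))
    (hker : ∀ x : ((i : Fin c) × Fin (nsz i)) → IsLocalRing.ResidueField 𝔬,
      (∀ k, x ᵥ* (C k).map (IsLocalRing.residue 𝔬) = 0) ↔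
        (∀ y : (i : Fin c) × Fin (nsz i), y.1.val + 1 ≠ c → x y = 0))
    (M : Matrix ((i : Fin c) × Fin (nsz i)) ((i : Fin c) × Fin (nsz i)) 𝔬)
    (hM : M.det ≠ 0)
    (hstab : ∀ k, ∀ v ∈ Submodule.span 𝔬 (Set.range fun i => M i),
      v ᵥ* C k ∈ Submodule.span 𝔬 (Set.range fun i => M i)) :
    ∀ a : ℕ, (∀ x y, π ^ a ∣ M x y) ↔ (∀ x y, π ^ a ∣ (M * δ) x y) := by
  intro a
  have hπ0 : π ≠ 0 := hπ.ne_zero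
  constructor
  · intro h x y
    rw [hδ, Matrix.mul_diagonal]
    exact (h x y).mul_right _
  · intro h
    set Λ := Submodule.span 𝔬 (Set.range fun i => M i) with hΛ
    have hmaxid : IsLocalRing.maximalIdeal 𝔬 = Ideal.span {π} := hπ.maximalIdeal_eq
    have hres : ∀ z : 𝔬, IsLocalRing.residue 𝔬 z = 0 ↔ π ∣ z := by
      intro z
      rw [IsLocalRing.residue]
      exact Ideal.Quotient.eq_zero_iff_mem.trans
        (by rw [hmaxid, Ideal.mem_span_singleton])
    -- all elements of Λ have last-block coordinates divisible by π^a
    have hlast : ∀ w ∈ Λ, ∀ y : (i : Fin c) × Fin (nsz i), y.1.val + 1 = c →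
        π ^ a ∣ w y := by
      have hle : Λ ≤
          { carrier := {w | ∀ y : (i : Fin c) × Fin (nsz i), y.1.val + 1 = c → π ^ a ∣ w y},
            add_mem' := fun hu hv y hy => dvd_add (hu y hy) (hv y hy),
            zero_mem' := fun y _ => dvd_zero _,
            smul_mem' := fun r w hw y hy => (hw y hy).mul_left r } := by
        rw [hΛ]
        apply Submodule.span_le.mpr
        rintro _ ⟨x, rfl⟩ y hy
        have h1 := h x y
        rw [hδ, Matrix.mul_diagonal, hy, Nat.sub_self, pow_zero, mul_one] at h1
        exact h1
      exact fun w hw => hle hw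
    have key : ∀ t : ℕ, t ≤ a → ∀ w ∈ Λ, ∀ y, π ^ t ∣ w y := by
      intro t
      induction t with
      | zero => intro _ w _ y; simp
      | succ t ih =>
        intro hta w₀ hw₀ y₀₀
        have hPt := ih (Nat.le_of_succ_le hta)
        have Q : ∀ s : ℕ, ∀ w ∈ Λ, ∀ y : (i : Fin c) × Fin (nsz i),
            c - 1 - s ≤ y.1.val → π ^ (t + 1) ∣ w y := by
          intro s
          induction s with
          | zero =>
            intro w hw y hy
            have hyc : y.1.val + 1 = c := by
              have := y.1.isLt; omega
            exact dvd_trans (pow_dvd_pow π hta) (hlast w hw y hyc)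
          | succ s ihs =>
            intro w hw y₀ hy₀
            by_cases hcase : c - 1 - s ≤ y₀.1.val
            · exact ihs w hw y₀ hcase
            · have hb : y₀.1.val = c - 1 - (s + 1) := by omega
              have hb1 : c - 1 - (s + 1) + 1 = c - 1 - s := by omega
              have hb1c : c - 1 - (s + 1) + 1 ≠ c := by omega
              choose u hu using fun y => hPt w hw y
              set x : ((i : Fin c) × Fin (nsz i)) → IsLocalRing.ResidueField 𝔬 :=
                fun y => if c - 1 - (s + 1) ≤ y.1.val then IsLocalRing.residue 𝔬 (u y)
                  else 0 with hxdef
              have hx : ∀ k, x ᵥ* (C k).map (IsLocalRing.residue 𝔬) = 0 := by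
                intro k
                funext y
                show (∑ j, x j * ((C k).map (IsLocalRing.residue 𝔬)) j y) = 0
                by_cases hyb : c - 1 - (s + 1) + 1 ≤ y.1.val
                · have hsum : (∑ j, x j * ((C k).map (IsLocalRing.residue 𝔬)) j y) =
                      IsLocalRing.residue 𝔬 (∑ j, u j * C k j y) := by
                    rw [map_sum]
                    apply Finset.sum_congr rfl
                    intro j _
                    by_cases hj : c - 1 - (s + 1) ≤ j.1.val
                    · rw [hxdef]
                      simp only [hj, if_pos, Matrix.map_apply, ← map_mul]
                    · have hC0 : C k j y = 0 := hC k j y (by omega)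
                      rw [hxdef]
                      simp [hj, hC0]
                  rw [hsum, hres]
                  have hwC : w ᵥ* C k ∈ Λ := hstab k w hw
                  have h2 : π ^ (t + 1) ∣ (w ᵥ* C k) y := ihs _ hwC y (by omega)
                  have h3 : (w ᵥ* C k) y = π ^ t * ∑ j, u j * C k j y := by
                    show (∑ j, w j * C k j y) = _
                    rw [Finset.mul_sum]
                    apply Finset.sum_congr rfl
                    intro j _
                    rw [hu j, mul_assoc]
                  rw [h3, pow_succ] at h2
                  exact (mul_dvd_mul_iff_left (pow_ne_zero t hπ0)).mp h2
                · apply Finset.sum_eq_zero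
                  intro j _
                  by_cases hj : y.1.val = j.1.val + 1
                  · have hjb : ¬ (c - 1 - (s + 1) ≤ j.1.val) := by omega
                    rw [hxdef]
                    simp [hjb]
                  · have hC0 : C k j y = 0 := hC k j y hj
                    simp [hC0]
              have hx0 := (hker x).mp hx y₀ (by rw [hb]; exact hb1c)
              rw [hxdef] at hx0
              simp only [hb, le_refl, if_pos] at hx0
              have hdvd : π ∣ u y₀ := (hres _).mp hx0
              rw [hu y₀, pow_succ]
              exact mul_dvd_mul (dvd_refl _) hdvd
        exact Q (c - 1) w₀ hw₀ y₀₀ (by omega)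
    intro x y
    exact key a le_rfl (M x) (Submodule.subset_span ⟨x, rfl⟩) y
end

section
/- Let λ = (λ₁ ≥ ⋯ ≥ λ_r) be a partition and N = 1 + λ₁ + ⋯ + λ_r. Define the rational polyhedral cone C_λ = {v ∈ ℝ^N_{≥0} : for all i ∈ {1,…,r}, v₀ ≥ v_{i2} and v_{i1} ≥ v_{i2} ≥ ⋯ ≥ v_{iλ_i}}, with coordinates v₀ and v_{ij} (1 ≤ i ≤ r, 1 ≤ j ≤ λ_i), and let C_λ° be the set obtained by replacing all the defining inequalities (including the nonnegativity of every coordinate) by strict inequalities. Then there exists a vector β ∈ C_λ° with all coordinates positive integers such that for every γ ∈ C_λ° with all coordinates positive integers one has γ − β ∈ C_λ, if and only if λ is a near rectangle, i.e. λ = (c,…,c,1,…,1) for some c ≥ 1 and multiplicities r₁, r₂ ≥ 0. -/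
/-- The index set of coordinates: `v₀` (i.e. `none`) together with `v_{ij}`
for `1 ≤ i ≤ r`, `1 ≤ j ≤ λ_i` (0-indexed here). -/
abbrev ConeIdx (r : ℕ) (lam : Fin r → ℕ) : Type := Option ((i : Fin r) × Fin (lam i))

/-- The rational polyhedral cone `C_λ ⊆ ℝ^N_{≥0}`:
all coordinates nonnegative, `v₀ ≥ v_{i2}` and `v_{i1} ≥ v_{i2} ≥ ⋯ ≥ v_{iλ_i}`. -/
def InCone {r : ℕ} (lam : Fin r → ℕ) (v : ConeIdx r lam → ℝ) : Prop :=
  (∀ x, 0 ≤ v x) ∧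
  (∀ i : Fin r, ∀ h : 1 < lam i, v (some ⟨i, ⟨1, h⟩⟩) ≤ v none) ∧
  (∀ (i : Fin r) (j : Fin (lam i)) (h : j.val + 1 < lam i),
    v (some ⟨i, ⟨j.val + 1, h⟩⟩) ≤ v (some ⟨i, j⟩))

/-- The interior `C_λ°`: all defining inequalities strict. -/
def InConeInterior {r : ℕ} (lam : Fin r → ℕ) (v : ConeIdx r lam → ℝ) : Prop :=
  (∀ x, 0 < v x) ∧
  (∀ i : Fin r, ∀ h : 1 < lam i, v (some ⟨i, ⟨1, h⟩⟩) < v none) ∧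
  (∀ (i : Fin r) (j : Fin (lam i)) (h : j.val + 1 < lam i),
    v (some ⟨i, ⟨j.val + 1, h⟩⟩) < v (some ⟨i, j⟩))

/-- All coordinates are positive integers. -/
def IsPosIntegral {r : ℕ} (lam : Fin r → ℕ) (v : ConeIdx r lam → ℝ) : Prop :=
  ∀ x, ∃ k : ℕ, 0 < k ∧ v x = (k : ℝ)

/-- `λ` is a near rectangle: `λ = (c,…,c,1,…,1)` for some `c ≥ 1`. -/
def IsNearRectangle {r : ℕ} (lam : Fin r → ℕ) : Prop :=
  ∃ c r₁ : ℕ, 1 ≤ c ∧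
    ∀ i : Fin r, (i.val < r₁ → lam i = c) ∧ (r₁ ≤ i.val → lam i = 1)

/-- Generic integer vector with row `i` taking values `h i, h i - 1, …`. -/
noncomputable def gamVec {r : ℕ} (lam : Fin r → ℕ) (h : Fin r → ℕ) : ConeIdx r lam → ℝ
  | none => if hr : 0 < r then (lam ⟨0, hr⟩ : ℝ) else 1
  | some ⟨i, j⟩ => ((h i - j.val : ℕ) : ℝ)

lemma posint_one_le {r} {lam : Fin r → ℕ} {γ : ConeIdx r lam → ℝ}
    (h2 : IsPosIntegral lam γ) (x : ConeIdx r lam) : 1 ≤ γ x := by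
  obtain ⟨k, hk, he⟩ := h2 x
  rw [he]; exact_mod_cast hk

lemma posint_succ_le {r} {lam : Fin r → ℕ} {γ : ConeIdx r lam → ℝ}
    (h2 : IsPosIntegral lam γ) {x y : ConeIdx r lam} (h : γ x < γ y) : γ x + 1 ≤ γ y := by
  obtain ⟨k, _, hk⟩ := h2 x
  obtain ⟨m, _, hm⟩ := h2 y
  rw [hk, hm] at h ⊢
  have : k < m := by exact_mod_cast h
  exact_mod_cast Nat.succ_le_of_lt this

lemma row_bound {r} {lam : Fin r → ℕ} {γ : ConeIdx r lam → ℝ}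
    (h1 : InConeInterior lam γ) (h2 : IsPosIntegral lam γ) :
    ∀ (d : ℕ) (i : Fin r) (j : Fin (lam i)), j.val + d + 1 = lam i →
      ((d : ℝ) + 1) ≤ γ (some ⟨i, j⟩) := by
  intro d
  induction d with
  | zero =>
    intro i j _
    simpa using posint_one_le h2 (some ⟨i, j⟩)
  | succ d ih =>
    intro i j hj
    have hlt : j.val + 1 < lam i := by omega
    have hs := posint_succ_le h2 (h1.2.2 i j hlt)
    have hb := ih i ⟨j.val + 1, hlt⟩ (by simp; omega)
    push_cast at hb ⊢
    linarith

lemma row_lb {r} {lam : Fin r → ℕ} {γ : ConeIdx r lam → ℝ}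
    (h1 : InConeInterior lam γ) (h2 : IsPosIntegral lam γ) (i : Fin r) (j : Fin (lam i)) :
    ((lam i - j.val : ℕ) : ℝ) ≤ γ (some ⟨i, j⟩) := by
  have hj := j.isLt
  have := row_bound h1 h2 (lam i - j.val - 1) i j (by omega)
  have hn : lam i - j.val = (lam i - j.val - 1) + 1 := by omega
  rw [hn]
  exact_mod_cast this

lemma zero_lb {r} {lam : Fin r → ℕ} {γ : ConeIdx r lam → ℝ}
    (h1 : InConeInterior lam γ) (h2 : IsPosIntegral lam γ) (i : Fin r) (h : 1 < lam i) :
    (lam i : ℝ) ≤ γ none := by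
  have hs := posint_succ_le h2 (h1.2.1 i h)
  have hb := row_lb h1 h2 i ⟨1, h⟩
  have hcast : ((lam i - 1 : ℕ) : ℝ) = (lam i : ℝ) - 1 := by
    push_cast [Nat.cast_sub (by omega : 1 ≤ lam i)]
    ring
  rw [hcast] at hb
  linarith

lemma gamVec_interior {r} (lam : Fin r → ℕ) (h : Fin r → ℕ)
    (hpos : ∀ i, 1 ≤ lam i)
    (hge : ∀ i, lam i ≤ h i) (hle : ∀ (hr : 0 < r) (i : Fin r), h i ≤ lam ⟨0, hr⟩) :
    InConeInterior lam (gamVec lam h) := by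
  refine ⟨?_, ?_, ?_⟩
  · rintro (_ | ⟨i, j⟩)
    · simp only [gamVec]
      split
      · rename_i hrr
        have h0 : 0 < lam ⟨0, hrr⟩ := hpos _
        exact_mod_cast h0
      · norm_num
    · have hj := j.isLt
      have : 0 < h i - j.val := by have := hge i; omega
      simp only [gamVec]
      exact_mod_cast this
  · intro i hi
    have hr : 0 < r := i.pos
    have h1 : h i - 1 < lam ⟨0, hr⟩ := by
      have := hle hr i
      have := hpos (⟨0, hr⟩ : Fin r)
      omega
    simp only [gamVec, dif_pos hr]
    exact_mod_cast h1
  · intro i j hj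
    have hj' := j.isLt
    have : h i - (j.val + 1) < h i - j.val := by have := hge i; omega
    simp only [gamVec]
    exact_mod_cast this

lemma gamVec_posint {r} (lam : Fin r → ℕ) (h : Fin r → ℕ)
    (hpos : ∀ i, 1 ≤ lam i) (hge : ∀ i, lam i ≤ h i) :
    IsPosIntegral lam (gamVec lam h) := by
  rintro (_ | ⟨i, j⟩)
  · simp only [gamVec]
    split
    · exact ⟨lam ⟨0, ‹_›⟩, hpos _, rfl⟩
    · exact ⟨1, one_pos, by norm_num⟩
  · have hj := j.isLt
    refine ⟨h i - j.val, by have := hge i; omega, rfl⟩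

/-- Proposition 4.10: the cone `C_λ` has a unique minimal integral
interior vector if and only if `λ` is a near rectangle. -/
theorem cone_min_interior_iff_near_rectangle (r : ℕ) (lam : Fin r → ℕ)
    (hpos : ∀ i, 1 ≤ lam i) (hmono : ∀ i j : Fin r, i ≤ j → lam j ≤ lam i) :
    (∃ β : ConeIdx r lam → ℝ, InConeInterior lam β ∧ IsPosIntegral lam β ∧
      ∀ γ : ConeIdx r lam → ℝ, InConeInterior lam γ → IsPosIntegral lam γ →
        InCone lam (γ - β))
    ↔ IsNearRectangle lam := by
  constructor
  · rintro ⟨β, hβ1, hβ2, hmin⟩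
    rcases Nat.eq_zero_or_pos r with hr | hr
    · subst hr
      exact ⟨1, 0, le_refl _, fun i => i.elim0⟩
    set L := lam ⟨0, hr⟩ with hL
    by_cases hcase : ∀ i : Fin r, lam i = 1 ∨ lam i = L
    · -- near rectangle with c = L, r₁ = card of initial segment
      set S : Finset (Fin r) := Finset.univ.filter (fun i => lam i = L) with hS
      have hdc : ∀ i j : Fin r, j ≤ i → i ∈ S → j ∈ S := by
        intro i j hji hiS
        simp only [hS, Finset.mem_filter, Finset.mem_univ, true_and] at hiS ⊢
        have h1 := hmono j i hji
        have h2 := hmono ⟨0, hr⟩ j (by exact Fin.mk_le_of_le_val (Nat.zero_le _))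
        omega
      refine ⟨L, S.card, hpos _, fun i => ⟨?_, ?_⟩⟩
      · intro hi
        by_contra hcon
        have hsub : S ⊆ Finset.Iio i := by
          intro j hj
          rw [Finset.mem_Iio]
          by_contra hcc
          push_neg at hcc
          exact hcon (by
            have := hdc j i hcc hj
            simpa [hS] using this)
        have := Finset.card_le_card hsub
        rw [Fin.card_Iio] at this
        omega
      · intro hi
        by_contra hcon
        have hiS : i ∈ S := by
          rcases hcase i with h | h
          · exact absurd h hcon
          · simp [hS, h]
        have hsub : Finset.Iic i ⊆ S := fun j hj => hdc i j (Finset.mem_Iic.mp hj) hiS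
        have := Finset.card_le_card hsub
        rw [Fin.card_Iic] at this
        omega
    · -- contradiction: not near-rectangular shape
      exfalso
      push_neg at hcase
      obtain ⟨i', hi1, hiL⟩ := hcase
      have hi2 : 2 ≤ lam i' := by have := hpos i'; omega
      have hiL' : lam i' < L := by
        have := hmono ⟨0, hr⟩ i' (Fin.mk_le_of_le_val (Nat.zero_le _))
        omega
      have hL2 : 1 < L := by omega
      -- β none = L
      have hb0 : β none = (L : ℝ) := by
        have h1 : (L : ℝ) ≤ β none := zero_lb hβ1 hβ2 ⟨0, hr⟩ hL2
        have hm := hmin (gamVec lam lam) (gamVec_interior lam lam hpos (fun _ => le_refl _)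
          (fun hr i => hmono ⟨0, hr⟩ i (Fin.mk_le_of_le_val (Nat.zero_le _))))
          (gamVec_posint lam lam hpos (fun _ => le_refl _))
        have h2 := hm.1 none
        simp only [Pi.sub_apply, gamVec, dif_pos hr] at h2
        linarith
      -- β at (i', 1) = lam i' - 1
      have hb1 : β (some ⟨i', ⟨1, hi2⟩⟩) = ((lam i' - 1 : ℕ) : ℝ) := by
        have h1 := row_lb hβ1 hβ2 i' ⟨1, hi2⟩
        have hm := hmin (gamVec lam lam) (gamVec_interior lam lam hpos (fun _ => le_refl _)
          (fun hr i => hmono ⟨0, hr⟩ i (Fin.mk_le_of_le_val (Nat.zero_le _))))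
          (gamVec_posint lam lam hpos (fun _ => le_refl _))
        have h2 := hm.1 (some ⟨i', ⟨1, hi2⟩⟩)
        simp only [Pi.sub_apply, gamVec] at h2
        linarith
      -- counterexample γ
      set hfun : Fin r → ℕ := Function.update lam i' L with hhf
      have hge : ∀ i, lam i ≤ hfun i := by
        intro i
        rcases eq_or_ne i i' with h | h
        · subst h; simp [hhf]; omega
        · simp [hhf, Function.update_of_ne h]
      have hle : ∀ (hr : 0 < r) (i : Fin r), hfun i ≤ lam ⟨0, hr⟩ := by
        intro hr i
        rcases eq_or_ne i i' with h | h
        · subst h; simp [hhf]; exact le_refl _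
        · simp only [hhf, Function.update_of_ne h]
          exact hmono ⟨0, hr⟩ i (Fin.mk_le_of_le_val (Nat.zero_le _))
      have hm := hmin (gamVec lam hfun) (gamVec_interior lam hfun hpos hge hle)
        (gamVec_posint lam hfun hpos hge)
      have h2 := hm.2.1 i' hi2
      simp only [Pi.sub_apply, gamVec, dif_pos hr] at h2
      rw [hb0, hb1] at h2
      have hup : hfun i' = L := by simp [hhf]
      rw [hup] at h2
      have hc1 : ((L - 1 : ℕ) : ℝ) = (L : ℝ) - 1 := by
        push_cast [Nat.cast_sub (by omega : 1 ≤ L)]; ring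
      have hc2 : ((lam i' - 1 : ℕ) : ℝ) = (lam i' : ℝ) - 1 := by
        push_cast [Nat.cast_sub (by omega : 1 ≤ lam i')]; ring
      rw [hc1, hc2] at h2
      have : (lam i' : ℝ) < (L : ℝ) := by exact_mod_cast hiL'
      linarith
  · rintro ⟨c, r₁, hc, hcr⟩
    refine ⟨gamVec lam lam, gamVec_interior lam lam hpos (fun _ => le_refl _)
      (fun hr i => hmono ⟨0, hr⟩ i (Fin.mk_le_of_le_val (Nat.zero_le _))),
      gamVec_posint lam lam hpos (fun _ => le_refl _), ?_⟩
    intro γ hγ1 hγ2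
    refine ⟨?_, ?_, ?_⟩
    · rintro (_ | ⟨i, j⟩)
      · simp only [Pi.sub_apply, gamVec]
        split
        · rename_i hr
          rcases Nat.lt_or_ge 1 (lam ⟨0, hr⟩) with h | h
          · have := zero_lb hγ1 hγ2 ⟨0, hr⟩ h
            linarith
          · have h1 : lam ⟨0, hr⟩ = 1 := le_antisymm h (hpos _)
            rw [h1]
            have := posint_one_le hγ2 none
            norm_num
            linarith
        · have := posint_one_le hγ2 none
          linarith
      · have := row_lb hγ1 hγ2 i j
        simp only [Pi.sub_apply, gamVec]
        linarith
    · intro i hi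
      have hr : 0 < r := i.pos
      -- lam i = lam 0 by near rectangle
      have hiL : lam i = lam ⟨0, hr⟩ := by
        have hir : i.val < r₁ := by
          by_contra hcc
          push_neg at hcc
          have := (hcr i).2 hcc
          omega
        have h1 := (hcr i).1 hir
        have h2 := (hcr ⟨0, hr⟩).1 (Nat.lt_of_le_of_lt (Nat.zero_le _) hir)
        rw [h1, h2]
      have hs := posint_succ_le hγ2 (hγ1.2.1 i hi)
      simp only [Pi.sub_apply, gamVec, dif_pos hr]
      rw [← hiL]
      have hc2 : ((lam i - 1 : ℕ) : ℝ) = (lam i : ℝ) - 1 := by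
        push_cast [Nat.cast_sub (by omega : 1 ≤ lam i)]; ring
      rw [hc2]
      linarith
    · intro i j hj
      have hs := posint_succ_le hγ2 (hγ1.2.2 i j hj)
      simp only [Pi.sub_apply, gamVec]
      have hj' := j.isLt
      have hc2 : ((lam i - (j.val + 1) : ℕ) : ℝ) = ((lam i - j.val : ℕ) : ℝ) - 1 := by
        have h1 : lam i - (j.val + 1) + 1 = lam i - j.val := by omega
        push_cast [← h1]
        ring
      rw [hc2]
      linarith
end

section
/- Let n ≥ 1 and define W_n(X,Y) ∈ ℚ(X,Y) by W_n(X,Y) = (Π_{i=0}^{n−1} (1 − XⁱY))⁻¹ · (1 − x_n)⁻¹ · Σ_{I ⊆ {1,…,n−1}} binom(n,I)_{X⁻¹} · Π_{i∈I} x_i/(1 − x_i), where x_j = X^{j(2n−j)} Y^{n+j} for 1 ≤ j ≤ n. Then W_n(X⁻¹,Y⁻¹) = X^{n(2n−1)} · Y^{3n} · W_n(X,Y) in ℚ(X,Y). -/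
/-- The Gaussian binomial coefficient `binom(a,b)_x = ∏_{i=1}^{b} (1 − x^{a−b+i})/(1 − x^i)`. -/
noncomputable def gaussBinom {F : Type} [Field F] (x : F) (a b : ℕ) : F :=
  ∏ i ∈ Finset.range b, (1 - x ^ (a - i)) / (1 - x ^ (i + 1))

/-- The Gaussian multinomial coefficient `binom(n,I)_x = binom(n,i_l)_x ⋯ binom(i₂,i₁)_x`
for `I = {i₁ < ⋯ < i_l}`. -/
noncomputable def gaussMultinom {F : Type} [Field F] (x : F) (n : ℕ) (I : Finset ℕ) : F :=
  (((I.sort (· ≤ ·)).zip ((I.sort (· ≤ ·)).tail ++ [n])).map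
    fun p => gaussBinom x p.2 p.1).prod

/-- The rational function `W_n(X,Y)` of Theorem 5.2 / 5.4 for `f = (n)`, as a function
of two elements of a field. -/
noncomputable def Wabelian {F : Type} [Field F] (n : ℕ) (X Y : F) : F :=
  (∏ i ∈ Finset.range n, (1 - X ^ i * Y))⁻¹ *
    (1 - X ^ (n * (2 * n - n)) * Y ^ (n + n))⁻¹ *
    ∑ I ∈ (Finset.Icc 1 (n - 1)).powerset,
      gaussMultinom X⁻¹ n I *
        ∏ i ∈ I, (X ^ (i * (2 * n - i)) * Y ^ (n + i) *
          (1 - X ^ (i * (2 * n - i)) * Y ^ (n + i))⁻¹)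

namespace WFEaux

open Finset

variable {F : Type} [Field F]

/-- Triangular number. -/
def csum (n : ℕ) : ℕ := ∑ i ∈ Finset.range n, i

lemma csum_succ (n : ℕ) : csum (n + 1) = csum n + n := Finset.sum_range_succ _ _

lemma csum_add (m d : ℕ) : csum (m + d) = csum m + m * d + csum d := by
  induction d with
  | zero => simp [csum]
  | succ d ih =>
    rw [← Nat.add_assoc, csum_succ, csum_succ, ih, Nat.mul_succ]
    omega

/-- q-factorial-like product. -/
noncomputable def qfac (q : F) (m : ℕ) : F := ∏ i ∈ Finset.range m, (1 - q ^ (i + 1))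

lemma qfac_zero (q : F) : qfac q 0 = 1 := rfl

lemma qfac_succ (q : F) (m : ℕ) : qfac q (m + 1) = qfac q m * (1 - q ^ (m + 1)) :=
  Finset.prod_range_succ _ _

lemma qfac_ne_zero {q : F} (hq : ∀ i, 1 ≤ i → q ^ i ≠ 1) (m : ℕ) : qfac q m ≠ 0 := by
  refine Finset.prod_ne_zero_iff.2 fun i _ => ?_
  exact sub_ne_zero.2 fun h => hq (i+1) (by omega) h.symm

lemma prod_num_eq (q : F) {b a : ℕ} (h : b ≤ a) :
    (∏ i ∈ Finset.range b, (1 - q ^ (a - i))) * qfac q (a - b) = qfac q a := by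
  induction b with
  | zero => simp
  | succ b ih =>
    rw [Finset.prod_range_succ]
    have h1 : b ≤ a := by omega
    have h2 : a - b = (a - (b+1)) + 1 := by omega
    rw [← ih h1, h2, qfac_succ]
    have h3 : a - (b+1) + 1 = a - b := by omega
    rw [h3]
    ring

lemma gaussBinom_mul_qfac {q : F} (hq : ∀ i, 1 ≤ i → q ^ i ≠ 1) {b a : ℕ} (h : b ≤ a) :
    gaussBinom q a b * (qfac q b * qfac q (a - b)) = qfac q a := by
  have : gaussBinom q a b = (∏ i ∈ Finset.range b, (1 - q ^ (a - i))) / qfac q b := by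
    rw [gaussBinom, qfac, ← Finset.prod_div_distrib]
  rw [this, div_mul_eq_mul_div, mul_comm (qfac q b), mul_div_assoc,
    mul_div_cancel_right₀ _ (qfac_ne_zero hq b), prod_num_eq q h]

lemma gaussBinom_eq_div {q : F} (hq : ∀ i, 1 ≤ i → q ^ i ≠ 1) {b a : ℕ} (h : b ≤ a) :
    gaussBinom q a b = qfac q a / (qfac q b * qfac q (a - b)) := by
  rw [eq_div_iff (by exact mul_ne_zero (qfac_ne_zero hq b) (qfac_ne_zero hq _)),
    gaussBinom_mul_qfac hq h]

lemma gaussBinom_zero_right (q : F) (a : ℕ) : gaussBinom q a 0 = 1 := by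
  simp [gaussBinom]

lemma gaussBinom_of_lt {q : F} {a b : ℕ} (h : a < b) : gaussBinom q a b = 0 := by
  refine Finset.prod_eq_zero (Finset.mem_range.2 h) ?_
  simp [Nat.sub_self]

lemma gaussBinom_self {q : F} (hq : ∀ i, 1 ≤ i → q ^ i ≠ 1) (a : ℕ) :
    gaussBinom q a a = 1 := by
  have h := gaussBinom_mul_qfac hq (le_refl a)
  rw [Nat.sub_self, qfac_zero, mul_one] at h
  have := qfac_ne_zero hq a
  field_simp at h
  tauto

lemma gaussBinom_pascal {q : F} (hq : ∀ i, 1 ≤ i → q ^ i ≠ 1) {a b : ℕ}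
    (ha : 1 ≤ a) (hb : 1 ≤ b) :
    gaussBinom q a b = q ^ b * gaussBinom q (a - 1) b + gaussBinom q (a - 1) (b - 1) := by
  rcases lt_trichotomy a b with h | h | h
  · rw [gaussBinom_of_lt h, gaussBinom_of_lt (by omega), gaussBinom_of_lt (by omega)]
    ring
  · subst h
    rw [gaussBinom_self hq, gaussBinom_of_lt (by omega)]
    have : a - 1 - (a - 1) = 0 := by omega
    rw [show gaussBinom q (a-1) (a-1) = 1 from gaussBinom_self hq _]
    ring
  · -- b < a
    have hba : b ≤ a := by omega
    have hb1 : b - 1 ≤ a - 1 := by omega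
    have hba1 : b ≤ a - 1 := by omega
    rw [gaussBinom_eq_div hq hba, gaussBinom_eq_div hq hba1, gaussBinom_eq_div hq hb1]
    have e1 : qfac q a = qfac q (a-1) * (1 - q ^ a) := by
      have := qfac_succ q (a-1)
      rw [show a - 1 + 1 = a by omega] at this
      exact this
    have e2 : qfac q b = qfac q (b-1) * (1 - q ^ b) := by
      have := qfac_succ q (b-1)
      rw [show b - 1 + 1 = b by omega] at this
      exact this
    have e3 : qfac q (a - b) = qfac q (a - b - 1) * (1 - q ^ (a - b)) := by
      have := qfac_succ q (a-b-1)
      rw [show a - b - 1 + 1 = a - b by omega] at this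
      exact this
    have e4 : a - 1 - b = a - b - 1 := by omega
    have e5 : a - 1 - (b - 1) = a - b := by omega
    have e6 : q ^ a = q ^ b * q ^ (a - b) := by
      rw [← pow_add]
      congr 1
      omega
    rw [e4, e5, e1, e2, e3, e6]
    have n1 := qfac_ne_zero hq (a-1)
    have n2 := qfac_ne_zero hq (b-1)
    have n3 := qfac_ne_zero hq (a-b-1)
    have n4 : (1 - q ^ b) ≠ 0 := sub_ne_zero.2 fun hh => hq b hb hh.symm
    have n5 : (1 - q ^ (a-b)) ≠ 0 := sub_ne_zero.2 fun hh => hq (a-b) (by omega) hh.symm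
    field_simp
    ring

/-- Alternating-sum helper: `B r`. -/
noncomputable def Bsum (q : F) (r : ℕ) : F :=
  ∑ j ∈ Finset.range (r + 1), (-1 : F) ^ (r + j) * q ^ csum (r - j) * gaussBinom q r j

lemma Bsum_rec {q : F} (hq : ∀ i, 1 ≤ i → q ^ i ≠ 1) (r : ℕ) :
    Bsum q (r + 1) = (1 - q ^ r) * Bsum q r := by
  have hpb : ∀ j : ℕ, gaussBinom q (r+1) (j+1)
      = q^(j+1) * gaussBinom q r (j+1) + gaussBinom q r j := by
    intro j
    have h := gaussBinom_pascal hq (a := r+1) (b := j+1) (by omega) (by omega)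
    simpa using h
  show (∑ j ∈ Finset.range (r + 1 + 1),
      (-1 : F) ^ (r + 1 + j) * q ^ csum (r + 1 - j) * gaussBinom q (r+1) j)
    = (1 - q ^ r) * Bsum q r
  rw [Finset.sum_range_succ']
  have key : ∀ j ∈ Finset.range (r+1),
      (-1 : F) ^ (r + 1 + (j+1)) * q ^ csum (r + 1 - (j+1)) * gaussBinom q (r+1) (j+1)
      = (-(-1 : F) ^ (r + 1 + j)) * (q ^ csum (r - j) * q ^ (j+1)) * gaussBinom q r (j+1)
        + (-1 : F) ^ (r + j) * q ^ csum (r - j) * gaussBinom q r j := by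
    intro j hj
    rw [hpb j, show r + 1 - (j+1) = r - j by omega]
    have hs : (-1 : F) ^ (r + 1 + (j + 1)) = (-1 : F) ^ (r + j) := by
      rw [show r + 1 + (j+1) = (r+j) + 2 by omega, pow_add]
      simp
    have hs2 : (-(-1 : F) ^ (r + 1 + j)) = (-1 : F) ^ (r + j) := by
      rw [show r + 1 + j = (r+j) + 1 by omega, pow_succ]
      ring
    rw [hs, hs2]
    ring
  rw [Finset.sum_congr rfl key, Finset.sum_add_distrib]
  have hS2 : (∑ j ∈ Finset.range (r+1),
      (-1 : F) ^ (r + j) * q ^ csum (r - j) * gaussBinom q r j) = Bsum q r := rfl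
  rw [hS2, add_right_comm]
  have hS1 : (∑ j ∈ Finset.range (r+1),
        (-(-1 : F) ^ (r + 1 + j)) * (q ^ csum (r - j) * q ^ (j+1)) * gaussBinom q r (j+1))
      + (-1 : F) ^ (r + 1 + 0) * q ^ csum (r + 1 - 0) * gaussBinom q (r+1) 0
      = -(q ^ r * Bsum q r) := by
    rw [Finset.sum_range_succ, gaussBinom_of_lt (by omega : r < r + 1), mul_zero, add_zero]
    have hrphs : -(q ^ r * Bsum q r)
        = ∑ j ∈ Finset.range (r+1),
            -(q ^ r * ((-1 : F) ^ (r + j) * q ^ csum (r - j) * gaussBinom q r j)) := by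
      rw [Finset.sum_neg_distrib, ← Finset.mul_sum, hS2]
    rw [hrphs, Finset.sum_range_succ']
    congr 1
    · refine Finset.sum_congr rfl fun j hj => ?_
      have hjr : j < r := Finset.mem_range.1 hj
      have hc : csum (r - j) = csum (r - (j+1)) + (r - j - 1) := by
        have h := csum_succ (r - j - 1)
        rw [show r - j - 1 + 1 = r - j by omega] at h
        rw [h, Nat.sub_sub]
      have e1 : (-1 : F) ^ (r + 1 + j) = (-1 : F) ^ (r + j) * (-1) := by
        rw [show r + 1 + j = (r+j) + 1 by omega, pow_succ]
      have e2 : (-1 : F) ^ (r + (j + 1)) = (-1 : F) ^ (r + j) * (-1) := by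
        rw [show r + (j+1) = (r+j) + 1 by omega, pow_succ]
      have hq2 : q ^ (r - j - 1) * q ^ (j + 1) = q ^ r := by
        rw [← pow_add]
        congr 1
        omega
      rw [e1, e2, hc, pow_add q (csum (r - (j+1))) (r - j - 1)]
      calc (-((-1 : F) ^ (r + j) * (-1))) *
            ((q ^ csum (r - (j+1)) * q ^ (r - j - 1)) * q ^ (j+1)) * gaussBinom q r (j+1)
          = (-((-1 : F) ^ (r + j) * (-1))) * q ^ csum (r - (j+1)) *
              (q ^ (r - j - 1) * q ^ (j+1)) * gaussBinom q r (j+1) := by ring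
        _ = (-((-1 : F) ^ (r + j) * (-1))) * q ^ csum (r - (j+1)) * q ^ r *
              gaussBinom q r (j+1) := by rw [hq2]
        _ = -(q ^ r * ((-1 : F) ^ (r + j) * (-1) * q ^ csum (r - (j+1)) *
              gaussBinom q r (j+1))) := by ring
    · rw [gaussBinom_zero_right, gaussBinom_zero_right, Nat.sub_zero, Nat.sub_zero, Nat.add_zero,
        csum_succ, pow_add, pow_succ]
      ring
  rw [hS1]
  ring

lemma Bsum_eq_zero {q : F} (hq : ∀ i, 1 ≤ i → q ^ i ≠ 1) {r : ℕ} (hr : 1 ≤ r) :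
    Bsum q r = 0 := by
  induction r with
  | zero => omega
  | succ r ih =>
    rcases Nat.eq_or_lt_of_le hr with h | h
    · have hr0 : r = 0 := by omega
      subst hr0
      rw [Bsum_rec hq]
      simp
    · rw [Bsum_rec hq, ih (by omega), mul_zero]

lemma sum_one {q : F} (hq : ∀ i, 1 ≤ i → q ^ i ≠ 1) {r : ℕ} (hr : 1 ≤ r) :
    ∑ j ∈ Finset.range r, (-1 : F) ^ (r + 1 + j) * q ^ csum (r - j) * gaussBinom q r j = 1 := by
  have hB := Bsum_eq_zero hq (r := r) hr
  unfold Bsum at hB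
  rw [Finset.sum_range_succ, Nat.sub_self, gaussBinom_self hq] at hB
  have h1 : (-1 : F) ^ (r + r) = 1 := by
    rw [show r + r = 2 * r by omega, pow_mul]
    norm_num
  rw [h1] at hB
  have h2 : csum 0 = 0 := rfl
  rw [h2, pow_zero] at hB
  have key : ∀ j ∈ Finset.range r, (-1 : F) ^ (r + 1 + j) * q ^ csum (r - j) * gaussBinom q r j
      = -((-1 : F) ^ (r + j) * q ^ csum (r - j) * gaussBinom q r j) := by
    intro j hj
    rw [show r + 1 + j = (r + j) + 1 by omega, pow_succ]
    ring
  rw [Finset.sum_congr rfl key, Finset.sum_neg_distrib]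
  have := hB
  linear_combination -this

lemma gaussBinom_trinomial {q : F} (hq : ∀ i, 1 ≤ i → q ^ i ≠ 1) {k m n : ℕ}
    (hkm : k ≤ m) (hmn : m ≤ n) :
    gaussBinom q n m * gaussBinom q m k = gaussBinom q n k * gaussBinom q (n - k) (m - k) := by
  rw [gaussBinom_eq_div hq hmn, gaussBinom_eq_div hq hkm,
    gaussBinom_eq_div hq (le_trans hkm hmn), gaussBinom_eq_div hq (by omega : m - k ≤ n - k),
    show n - k - (m - k) = n - m by omega]
  have n1 := qfac_ne_zero hq n
  have n2 := qfac_ne_zero hq m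
  have n3 := qfac_ne_zero hq k
  have n4 := qfac_ne_zero hq (n - m)
  have n5 := qfac_ne_zero hq (m - k)
  have n6 := qfac_ne_zero hq (n - k)
  field_simp

lemma qid {q : F} (hq : ∀ i, 1 ≤ i → q ^ i ≠ 1) {k n : ℕ} (hk : k ≤ n - 1) (hn : 1 ≤ n) :
    ∑ m ∈ Finset.Ico k n,
      (-1 : F) ^ (n + 1 + m) * q ^ csum (n - m) * gaussBinom q n m * gaussBinom q m k
      = gaussBinom q n k := by
  have key : ∀ m ∈ Finset.Ico k n,
      (-1 : F) ^ (n + 1 + m) * q ^ csum (n - m) * gaussBinom q n m * gaussBinom q m k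
      = gaussBinom q n k *
          ((-1 : F) ^ (n + 1 + m) * q ^ csum (n - m) * gaussBinom q (n - k) (m - k)) := by
    intro m hm
    rw [Finset.mem_Ico] at hm
    rw [mul_assoc, gaussBinom_trinomial hq hm.1 (by omega : m ≤ n)]
    ring
  rw [Finset.sum_congr rfl key, ← Finset.mul_sum]
  have hsum : (∑ m ∈ Finset.Ico k n,
      (-1 : F) ^ (n + 1 + m) * q ^ csum (n - m) * gaussBinom q (n - k) (m - k)) = 1 := by
    rw [Finset.sum_Ico_eq_sum_range]
    have key2 : ∀ j ∈ Finset.range (n - k),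
        (-1 : F) ^ (n + 1 + (k + j)) * q ^ csum (n - (k + j)) * gaussBinom q (n - k) (k + j - k)
        = (-1 : F) ^ ((n - k) + 1 + j) * q ^ csum ((n - k) - j) * gaussBinom q (n - k) j := by
      intro j hj
      rw [Finset.mem_range] at hj
      rw [show k + j - k = j by omega, show n - (k + j) = (n - k) - j by omega,
        show n + 1 + (k + j) = ((n - k) + 1 + j) + 2 * k by omega, pow_add, pow_mul]
      norm_num
    rw [Finset.sum_congr rfl key2]
    exact sum_one hq (by omega)
  rw [hsum, mul_one]

lemma exp_sum {a b : ℕ} (h : b ≤ a) :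
    b * (a - b) + (∑ i ∈ Finset.range b, (i + 1)) = ∑ i ∈ Finset.range b, (a - i) := by
  induction b with
  | zero => simp
  | succ b ih =>
    rw [Finset.sum_range_succ, Finset.sum_range_succ, ← ih (by omega)]
    obtain ⟨e, he⟩ : ∃ e, a - b = e + 1 := ⟨a - b - 1, by omega⟩
    rw [he, show a - (b + 1) = e by omega]
    ring

lemma gaussBinom_inv {q : F} (hq0 : q ≠ 0) {a b : ℕ} (h : b ≤ a) :
    q ^ (b * (a - b)) * gaussBinom q⁻¹ a b = gaussBinom q a b := by
  have key : ∀ i ∈ Finset.range b, (1 - (q⁻¹) ^ (a - i)) / (1 - (q⁻¹) ^ (i + 1))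
      = (q ^ (i + 1) * (q ^ (a - i))⁻¹) * ((1 - q ^ (a - i)) / (1 - q ^ (i + 1))) := by
    intro i hi
    have hm : ∀ m : ℕ, (1 - (q⁻¹) ^ m) = (q ^ m)⁻¹ * (q ^ m - 1) := by
      intro m
      rw [inv_pow, mul_sub, inv_mul_cancel₀ (pow_ne_zero m hq0), mul_one]
    rw [hm (a - i), hm (i + 1), mul_div_mul_comm, inv_div_inv,
      show q ^ (a - i) - 1 = -(1 - q ^ (a - i)) by ring,
      show q ^ (i + 1) - 1 = -(1 - q ^ (i + 1)) by ring, neg_div_neg_eq,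
      div_eq_mul_inv (q ^ (i + 1))]
  show q ^ (b * (a - b)) * ∏ i ∈ Finset.range b, ((1 - (q⁻¹) ^ (a - i)) / (1 - (q⁻¹) ^ (i + 1)))
      = gaussBinom q a b
  rw [Finset.prod_congr rfl key, Finset.prod_mul_distrib, Finset.prod_mul_distrib,
    Finset.prod_inv_distrib, Finset.prod_pow_eq_pow_sum, Finset.prod_pow_eq_pow_sum,
    ← mul_assoc, ← mul_assoc, ← pow_add, exp_sum h,
    mul_inv_cancel₀ (pow_ne_zero _ hq0), one_mul]
  rfl

/-- gaussMultinom of the empty set. -/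
lemma gaussMultinom_empty (q : F) (n : ℕ) : gaussMultinom q n ∅ = 1 := by
  simp [gaussMultinom]

lemma sort_insert_max {m : ℕ} {I : Finset ℕ} (hI : ∀ i ∈ I, i < m) (hm : m ∉ I) :
    (insert m I).sort (· ≤ ·) = I.sort (· ≤ ·) ++ [m] := by
  have hnd : (I.sort (· ≤ ·) ++ [m]).Nodup := by
    rw [List.nodup_append]
    refine ⟨Finset.sort_nodup _ _, List.nodup_singleton m, ?_⟩
    intro a ha b hb hab
    rw [List.mem_singleton] at hb
    subst hb hab
    exact hm ((Finset.mem_sort _).1 ha)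
  have hsort : (I.sort (· ≤ ·) ++ [m]).Pairwise (· ≤ ·) := by
    rw [List.pairwise_append]
    refine ⟨Finset.pairwise_sort _ _, List.pairwise_singleton _ m, ?_⟩
    intro a ha b hb
    rw [List.mem_singleton] at hb
    subst hb
    exact le_of_lt (hI a ((Finset.mem_sort _).1 ha))
  have hfin : (I.sort (· ≤ ·) ++ [m]).toFinset = insert m I := by
    rw [List.toFinset_append, Finset.sort_toFinset]
    ext x
    simp [or_comm]
  calc (insert m I).sort (· ≤ ·) = ((I.sort (· ≤ ·) ++ [m]).toFinset).sort (· ≤ ·) := by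
        rw [hfin]
    _ = I.sort (· ≤ ·) ++ [m] := (List.toFinset_sort _ hnd).2 hsort

lemma gaussMultinom_insert (q : F) (n m : ℕ) (I : Finset ℕ)
    (hI : ∀ i ∈ I, i < m) (hm : m ∉ I) :
    gaussMultinom q n (insert m I) = gaussBinom q n m * gaussMultinom q m I := by
  have hs := sort_insert_max hI hm
  unfold gaussMultinom
  rw [hs]
  rcases hL : I.sort (· ≤ ·) with _ | ⟨a, t⟩
  · simp
  · rw [show ((a :: t) ++ [m]).tail = t ++ [m] from rfl,
      show (a :: t).tail = t from rfl,
      show (a :: t) ++ [m] = (a :: t) ++ [m] from rfl]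
    rw [List.zip_append (by simp : (a :: t).length = (t ++ [m]).length)]
    rw [List.map_append, List.prod_append]
    simp [mul_comm]

/-- The inner sum `S`. -/
noncomputable def Ssum (q : F) (x : ℕ → F) (n : ℕ) : F :=
  ∑ I ∈ (Finset.Icc 1 (n - 1)).powerset,
    gaussMultinom q n I * ∏ i ∈ I, (x i * (1 - x i)⁻¹)

lemma Ssum_helper (q : F) (x : ℕ → F) (n : ℕ) (k : ℕ) :
    (∑ I ∈ (Finset.Icc 1 k).powerset, gaussMultinom q n I * ∏ i ∈ I, (x i * (1 - x i)⁻¹))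
    = 1 + ∑ m ∈ Finset.Icc 1 k, gaussBinom q n m * (x m * (1 - x m)⁻¹) * Ssum q x m := by
  induction k with
  | zero =>
    rw [show Finset.Icc 1 0 = (∅ : Finset ℕ) from rfl]
    simp [gaussMultinom_empty]
  | succ k ih =>
    have hicc : Finset.Icc 1 (k + 1) = insert (k + 1) (Finset.Icc 1 k) := by
      ext a
      simp only [Finset.mem_Icc, Finset.mem_insert]
      omega
    have hnotmem : (k + 1) ∉ Finset.Icc 1 k := by
      simp [Finset.mem_Icc]
    rw [hicc, Finset.sum_powerset_insert hnotmem, ih]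
    have key : ∀ I ∈ (Finset.Icc 1 k).powerset,
        gaussMultinom q n (insert (k + 1) I) * ∏ i ∈ insert (k + 1) I, (x i * (1 - x i)⁻¹)
        = gaussBinom q n (k + 1) * (x (k + 1) * (1 - x (k + 1))⁻¹) *
            (gaussMultinom q (k + 1) I * ∏ i ∈ I, (x i * (1 - x i)⁻¹)) := by
      intro I hI
      rw [Finset.mem_powerset] at hI
      have hlt : ∀ i ∈ I, i < k + 1 := fun i hi => by
        have := (Finset.mem_Icc.1 (hI hi)).2
        omega
      have hnm : (k + 1) ∉ I := fun hmem => by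
        have := hlt _ hmem
        omega
      rw [gaussMultinom_insert q n (k + 1) I hlt hnm, Finset.prod_insert hnm]
      ring
    rw [Finset.sum_congr rfl key, ← Finset.mul_sum]
    have hS : (∑ I ∈ (Finset.Icc 1 k).powerset,
        gaussMultinom q (k + 1) I * ∏ i ∈ I, (x i * (1 - x i)⁻¹)) = Ssum q x (k + 1) := by
      unfold Ssum
      rw [show k + 1 - 1 = k from rfl]
    rw [hS, Finset.sum_insert hnotmem]
    ring

lemma Ssum_rec (q : F) (x : ℕ → F) (n : ℕ) :
    Ssum q x n = 1 + ∑ m ∈ Finset.Icc 1 (n - 1),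
      gaussBinom q n m * (x m * (1 - x m)⁻¹) * Ssum q x m := by
  unfold Ssum
  exact Ssum_helper q x n (n - 1)

lemma Ssum_aux {q : F} (hq : ∀ i, 1 ≤ i → q ^ i ≠ 1) {n : ℕ} (hn : 1 ≤ n)
    (x : ℕ → F) (hx1 : ∀ i, 1 ≤ i → i ≤ n - 1 → x i ≠ 1) :
    Ssum q x n = ∑ m ∈ Finset.range n,
      (-1 : F) ^ (n + 1 + m) * q ^ csum (n - m) * gaussBinom q n m *
        (if m = 0 then 1 else (1 - x m)⁻¹ * Ssum q x m) := by
  have hE : ∀ m ∈ Finset.range n, (if m = 0 then (1 : F) else (1 - x m)⁻¹ * Ssum q x m)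
      = ∑ J ∈ (Finset.Icc 1 (n - 1)).powerset,
          ((if J ∈ (Finset.Icc 1 (m - 1)).powerset then
              gaussMultinom q m J * ∏ i ∈ J, (x i * (1 - x i)⁻¹) else 0)
           + (if m ∈ J ∧ J.erase m ∈ (Finset.Icc 1 (m - 1)).powerset then
              gaussMultinom q m (J.erase m) * ∏ i ∈ J, (x i * (1 - x i)⁻¹) else 0)) := by
    intro m hm
    rw [Finset.mem_range] at hm
    by_cases hm0 : m = 0
    · subst hm0
      rw [if_pos rfl]
      have h1 : ∀ J ∈ (Finset.Icc 1 (n - 1)).powerset,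
          ((if J ∈ (Finset.Icc 1 (0 - 1)).powerset then
              gaussMultinom q 0 J * ∏ i ∈ J, (x i * (1 - x i)⁻¹) else 0)
           + (if 0 ∈ J ∧ J.erase 0 ∈ (Finset.Icc 1 (0 - 1)).powerset then
              gaussMultinom q 0 (J.erase 0) * ∏ i ∈ J, (x i * (1 - x i)⁻¹) else 0))
          = if J = ∅ then (1 : F) else 0 := by
      -- second condition always false; first iff J = ∅
        intro J hJ
        rw [Finset.mem_powerset] at hJ
        have h0J : 0 ∉ J := fun h0 => by
          have := Finset.mem_Icc.1 (hJ h0)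
          omega
        by_cases hJe : J = ∅
        · subst hJe
          rw [if_pos (Finset.empty_mem_powerset _),
            if_neg (fun hc => Finset.notMem_empty 0 hc.1), gaussMultinom_empty,
            Finset.prod_empty, mul_one, add_zero, if_pos rfl]
        · have hc1 : J ∉ (Finset.Icc 1 (0 - 1)).powerset := by
            intro hc
            rw [Finset.mem_powerset, show (0:ℕ) - 1 = 0 from rfl,
              show Finset.Icc 1 0 = (∅ : Finset ℕ) from rfl, Finset.subset_empty] at hc
            exact hJe hc
          rw [if_neg hc1, if_neg (fun hc => h0J hc.1), if_neg hJe, add_zero]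
      rw [Finset.sum_congr rfl h1, Finset.sum_ite_eq' _ (∅ : Finset ℕ) (fun _ => (1:F)),
        if_pos (Finset.empty_mem_powerset _)]
    · have hm1 : 1 ≤ m := by omega
      rw [if_neg hm0]
      have hxm : x m ≠ 1 := hx1 m hm1 (by omega)
      have h0 : (1 : F) - x m ≠ 0 := sub_ne_zero.2 (Ne.symm hxm)
      have hinv : (1 - x m)⁻¹ = 1 + x m * (1 - x m)⁻¹ := by
        field_simp
        ring
      rw [hinv, add_mul, one_mul, Finset.sum_add_distrib]
      have hsub : (Finset.Icc 1 (m - 1)).powerset ⊆ (Finset.Icc 1 (n - 1)).powerset :=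
        Finset.powerset_mono.2 (Finset.Icc_subset_Icc_right (by omega))
      congr 1
      · -- Ssum q x m = ∑ J ∈ P, ite1
        rw [Finset.sum_ite_mem, Finset.inter_eq_right.2 hsub]
        rfl
      · -- x m * (1 - x m)⁻¹ * Ssum q x m = ∑ J ∈ P, ite2
        rw [← Finset.sum_filter]
        have hLHS : x m * (1 - x m)⁻¹ * Ssum q x m
            = ∑ I ∈ (Finset.Icc 1 (m - 1)).powerset,
                gaussMultinom q m I * ∏ i ∈ insert m I, (x i * (1 - x i)⁻¹) := by
          show x m * (1 - x m)⁻¹ *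
              (∑ I ∈ (Finset.Icc 1 (m - 1)).powerset,
                gaussMultinom q m I * ∏ i ∈ I, (x i * (1 - x i)⁻¹)) = _
          rw [Finset.mul_sum]
          refine Finset.sum_congr rfl fun I hI => ?_
          rw [Finset.mem_powerset] at hI
          have hmI : m ∉ I := fun hc => by
            have := Finset.mem_Icc.1 (hI hc)
            omega
          rw [Finset.prod_insert hmI]
          ring
        rw [hLHS]
        refine Finset.sum_bij' (fun I _ => insert m I)
          (fun J _ => J.erase m) ?_ ?_ ?_ ?_ ?_
        · intro I hI
          rw [Finset.mem_powerset] at hI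
          rw [Finset.mem_filter]
          have hmI : m ∉ I := fun hc => by
            have := Finset.mem_Icc.1 (hI hc)
            omega
          refine ⟨?_, Finset.mem_insert_self m I, ?_⟩
          · rw [Finset.mem_powerset]
            refine Finset.insert_subset (Finset.mem_Icc.2 ⟨hm1, by omega⟩)
              (hI.trans (Finset.Icc_subset_Icc_right (by omega)))
          · rw [Finset.erase_insert hmI, Finset.mem_powerset]
            exact hI
        · intro J hJ
          rw [Finset.mem_filter] at hJ
          exact hJ.2.2
        · intro I hI
          rw [Finset.mem_powerset] at hI
          have hmI : m ∉ I := fun hc => by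
            have := Finset.mem_Icc.1 (hI hc)
            omega
          exact Finset.erase_insert hmI
        · intro J hJ
          rw [Finset.mem_filter] at hJ
          exact Finset.insert_erase hJ.2.1
        · intro I hI
          rw [Finset.mem_powerset] at hI
          have hmI : m ∉ I := fun hc => by
            have := Finset.mem_Icc.1 (hI hc)
            omega
          rw [Finset.erase_insert hmI]
  have hJ : ∀ J ∈ (Finset.Icc 1 (n - 1)).powerset,
      (∑ m ∈ Finset.range n, ((-1 : F) ^ (n + 1 + m) * q ^ csum (n - m) * gaussBinom q n m) *
          ((if J ∈ (Finset.Icc 1 (m - 1)).powerset then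
              gaussMultinom q m J * ∏ i ∈ J, (x i * (1 - x i)⁻¹) else 0)
           + (if m ∈ J ∧ J.erase m ∈ (Finset.Icc 1 (m - 1)).powerset then
              gaussMultinom q m (J.erase m) * ∏ i ∈ J, (x i * (1 - x i)⁻¹) else 0)))
      = gaussMultinom q n J * ∏ i ∈ J, (x i * (1 - x i)⁻¹) := by
    intro J hJP
    rw [Finset.mem_powerset] at hJP
    by_cases hJe : J = ∅
    · subst hJe
      have h2 : ∀ m ∈ Finset.range n,
          ((-1 : F) ^ (n + 1 + m) * q ^ csum (n - m) * gaussBinom q n m) *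
          ((if (∅ : Finset ℕ) ∈ (Finset.Icc 1 (m - 1)).powerset then
              gaussMultinom q m ∅ * ∏ i ∈ (∅ : Finset ℕ), (x i * (1 - x i)⁻¹) else 0)
           + (if m ∈ (∅ : Finset ℕ) ∧ (∅ : Finset ℕ).erase m ∈ (Finset.Icc 1 (m - 1)).powerset then
              gaussMultinom q m ((∅ : Finset ℕ).erase m) * ∏ i ∈ (∅ : Finset ℕ), (x i * (1 - x i)⁻¹) else 0))
          = (-1 : F) ^ (n + 1 + m) * q ^ csum (n - m) * gaussBinom q n m := by
        intro m hm
        rw [if_pos (Finset.empty_mem_powerset _), if_neg (fun hc => Finset.notMem_empty m hc.1),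
          gaussMultinom_empty, Finset.prod_empty]
        ring
      rw [Finset.sum_congr rfl h2, sum_one hq hn, gaussMultinom_empty, Finset.prod_empty, mul_one]
    · have hJne : J.Nonempty := Finset.nonempty_iff_ne_empty.2 hJe
      set k := J.max' hJne with hk
      have hkJ : k ∈ J := J.max'_mem hJne
      have hk1 : 1 ≤ k := (Finset.mem_Icc.1 (hJP hkJ)).1
      have hkn : k ≤ n - 1 := (Finset.mem_Icc.1 (hJP hkJ)).2
      have hJk : ∀ i ∈ J.erase k, i < k := by
        intro i hi
        have h1 := Finset.mem_of_mem_erase hi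
        have h2 := Finset.ne_of_mem_erase hi
        exact lt_of_le_of_ne (J.le_max' i h1) h2
      have hkodd : k ∉ J.erase k := Finset.notMem_erase k J
      have hins : insert k (J.erase k) = J := Finset.insert_erase hkJ
      have hgnJ : gaussMultinom q n J = gaussBinom q n k * gaussMultinom q k (J.erase k) := by
        conv_lhs => rw [← hins]
        exact gaussMultinom_insert q n k (J.erase k) hJk hkodd
      have h2 : ∀ m ∈ Finset.range n,
          ((-1 : F) ^ (n + 1 + m) * q ^ csum (n - m) * gaussBinom q n m) *
          ((if J ∈ (Finset.Icc 1 (m - 1)).powerset then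
              gaussMultinom q m J * ∏ i ∈ J, (x i * (1 - x i)⁻¹) else 0)
           + (if m ∈ J ∧ J.erase m ∈ (Finset.Icc 1 (m - 1)).powerset then
              gaussMultinom q m (J.erase m) * ∏ i ∈ J, (x i * (1 - x i)⁻¹) else 0))
          = (if k < m then ((-1 : F) ^ (n + 1 + m) * q ^ csum (n - m) * gaussBinom q n m *
                gaussBinom q m k) * (gaussMultinom q k (J.erase k) * ∏ i ∈ J, (x i * (1 - x i)⁻¹))
              else 0)
            + (if m = k then ((-1 : F) ^ (n + 1 + m) * q ^ csum (n - m) * gaussBinom q n m) *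
                (gaussMultinom q k (J.erase k) * ∏ i ∈ J, (x i * (1 - x i)⁻¹)) else 0) := by
        intro m hm
        rw [Finset.mem_range] at hm
        have hc1 : (J ∈ (Finset.Icc 1 (m - 1)).powerset) ↔ k < m := by
          rw [Finset.mem_powerset]
          constructor
          · intro hs
            have := Finset.mem_Icc.1 (hs hkJ)
            omega
          · intro hkm
            intro i hi
            have h1 := (Finset.mem_Icc.1 (hJP hi)).1
            have h2 := J.le_max' i hi
            rw [Finset.mem_Icc]
            omega
        have hc2 : (m ∈ J ∧ J.erase m ∈ (Finset.Icc 1 (m - 1)).powerset) ↔ m = k := by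
          constructor
          · rintro ⟨hmJ, hsub⟩
            rw [Finset.mem_powerset] at hsub
            by_contra hne
            have hmk : m < k := lt_of_le_of_ne (J.le_max' m hmJ) hne
            have hkerase : k ∈ J.erase m := Finset.mem_erase.2 ⟨by omega, hkJ⟩
            have := Finset.mem_Icc.1 (hsub hkerase)
            omega
          · intro hmk
            subst hmk
            refine ⟨hkJ, ?_⟩
            rw [Finset.mem_powerset]
            intro i hi
            rw [Finset.mem_Icc]
            have h1 := hJk i hi
            have h2 := (Finset.mem_Icc.1 (hJP (Finset.mem_of_mem_erase hi))).1
            omega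
        rw [mul_add]
        congr 1
        · by_cases hkm : k < m
          · rw [if_pos (hc1.2 hkm), if_pos hkm]
            have : gaussMultinom q m J = gaussBinom q m k * gaussMultinom q k (J.erase k) := by
              conv_lhs => rw [← hins]
              exact gaussMultinom_insert q m k (J.erase k) hJk hkodd
            rw [this]
            ring
          · rw [if_neg (fun hc => hkm (hc1.1 hc)), if_neg hkm]
            ring
        · by_cases hmk : m = k
          · rw [if_pos (hc2.2 hmk), if_pos hmk]
            subst hmk
            ring
          · rw [if_neg (fun hc => hmk (hc2.1 hc)), if_neg hmk]
            ring
      rw [Finset.sum_congr rfl h2, Finset.sum_add_distrib]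
      have hsum2 : (∑ m ∈ Finset.range n,
          (if m = k then ((-1 : F) ^ (n + 1 + m) * q ^ csum (n - m) * gaussBinom q n m) *
              (gaussMultinom q k (J.erase k) * ∏ i ∈ J, (x i * (1 - x i)⁻¹)) else 0))
          = ((-1 : F) ^ (n + 1 + k) * q ^ csum (n - k) * gaussBinom q n k) *
              (gaussMultinom q k (J.erase k) * ∏ i ∈ J, (x i * (1 - x i)⁻¹)) := by
        rw [Finset.sum_ite_eq' (Finset.range n) k, if_pos (Finset.mem_range.2 (by omega))]
      have hsum1 : (∑ m ∈ Finset.range n,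
          (if k < m then ((-1 : F) ^ (n + 1 + m) * q ^ csum (n - m) * gaussBinom q n m *
              gaussBinom q m k) *
              (gaussMultinom q k (J.erase k) * ∏ i ∈ J, (x i * (1 - x i)⁻¹)) else 0))
          = ∑ m ∈ Finset.Ico (k + 1) n,
              ((-1 : F) ^ (n + 1 + m) * q ^ csum (n - m) * gaussBinom q n m *
                gaussBinom q m k) *
              (gaussMultinom q k (J.erase k) * ∏ i ∈ J, (x i * (1 - x i)⁻¹)) := by
        rw [← Finset.sum_filter]
        congr 1
        ext a
        simp only [Finset.mem_filter, Finset.mem_range, Finset.mem_Ico]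
        omega
      rw [hsum1, hsum2]
      have hpeel : ((-1 : F) ^ (n + 1 + k) * q ^ csum (n - k) * gaussBinom q n k) *
              (gaussMultinom q k (J.erase k) * ∏ i ∈ J, (x i * (1 - x i)⁻¹))
          = ((-1 : F) ^ (n + 1 + k) * q ^ csum (n - k) * gaussBinom q n k *
              gaussBinom q k k) *
              (gaussMultinom q k (J.erase k) * ∏ i ∈ J, (x i * (1 - x i)⁻¹)) := by
        rw [gaussBinom_self hq, mul_one]
      rw [hpeel, add_comm, ← Finset.sum_eq_sum_Ico_succ_bot (by omega : k < n)
        (fun m => ((-1 : F) ^ (n + 1 + m) * q ^ csum (n - m) * gaussBinom q n m *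
              gaussBinom q m k) *
              (gaussMultinom q k (J.erase k) * ∏ i ∈ J, (x i * (1 - x i)⁻¹)))]
      rw [← Finset.sum_mul, qid hq hkn hn, hgnJ]
      ring
  symm
  calc ∑ m ∈ Finset.range n, (-1 : F) ^ (n + 1 + m) * q ^ csum (n - m) * gaussBinom q n m *
        (if m = 0 then 1 else (1 - x m)⁻¹ * Ssum q x m)
      = ∑ m ∈ Finset.range n, ∑ J ∈ (Finset.Icc 1 (n - 1)).powerset,
          ((-1 : F) ^ (n + 1 + m) * q ^ csum (n - m) * gaussBinom q n m) *
          ((if J ∈ (Finset.Icc 1 (m - 1)).powerset then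
              gaussMultinom q m J * ∏ i ∈ J, (x i * (1 - x i)⁻¹) else 0)
           + (if m ∈ J ∧ J.erase m ∈ (Finset.Icc 1 (m - 1)).powerset then
              gaussMultinom q m (J.erase m) * ∏ i ∈ J, (x i * (1 - x i)⁻¹) else 0)) := by
        refine Finset.sum_congr rfl fun m hm => ?_
        rw [hE m hm, Finset.mul_sum]
    _ = ∑ J ∈ (Finset.Icc 1 (n - 1)).powerset, ∑ m ∈ Finset.range n,
          ((-1 : F) ^ (n + 1 + m) * q ^ csum (n - m) * gaussBinom q n m) *
          ((if J ∈ (Finset.Icc 1 (m - 1)).powerset then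
              gaussMultinom q m J * ∏ i ∈ J, (x i * (1 - x i)⁻¹) else 0)
           + (if m ∈ J ∧ J.erase m ∈ (Finset.Icc 1 (m - 1)).powerset then
              gaussMultinom q m (J.erase m) * ∏ i ∈ J, (x i * (1 - x i)⁻¹) else 0)) :=
        Finset.sum_comm
    _ = ∑ J ∈ (Finset.Icc 1 (n - 1)).powerset,
          gaussMultinom q n J * ∏ i ∈ J, (x i * (1 - x i)⁻¹) := Finset.sum_congr rfl hJ
    _ = Ssum q x n := rfl

lemma Ssum_funeq {q : F} (hq0 : q ≠ 0) (hq : ∀ i, 1 ≤ i → q ^ i ≠ 1) :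
    ∀ n, 1 ≤ n → ∀ x : ℕ → F, (∀ i, 1 ≤ i → i ≤ n - 1 → x i ≠ 0) →
      (∀ i, 1 ≤ i → i ≤ n - 1 → x i ≠ 1) →
      q ^ csum n * Ssum q⁻¹ (fun i => (x i)⁻¹) n = (-1 : F) ^ (n + 1) * Ssum q x n := by
  intro n
  induction n using Nat.strong_induction_on with
  | _ n ih =>
  intro hn x hx0 hx1
  obtain ⟨n', rfl⟩ : ∃ n', n = n' + 1 := ⟨n - 1, by omega⟩
  rw [Ssum_rec q⁻¹ (fun i => (x i)⁻¹) (n' + 1), Ssum_aux hq (by omega) x hx1,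
    mul_add, mul_one, Finset.mul_sum, Finset.mul_sum, Finset.sum_range_succ']
  have hlast : (-1 : F) ^ (n' + 1 + 1) *
      ((-1 : F) ^ (n' + 1 + 1 + 0) * q ^ csum (n' + 1 - 0) * gaussBinom q (n' + 1) 0 *
        (if (0 : ℕ) = 0 then 1 else (1 - x 0)⁻¹ * Ssum q x 0)) = q ^ csum (n' + 1) := by
    rw [if_pos rfl, gaussBinom_zero_right, Nat.sub_zero, Nat.add_zero, mul_one, mul_one,
      ← mul_assoc, ← pow_add, show (n' + 1 + 1) + (n' + 1 + 1) = 2 * (n' + 2) by omega, pow_mul]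
    norm_num
  rw [hlast]
  rw [show Finset.Icc 1 (n' + 1 - 1) = Finset.Ico 1 (n' + 1) from by
    rw [show n' + 1 - 1 = n' from rfl, ← Finset.Ico_add_one_right_eq_Icc], Finset.sum_Ico_eq_sum_range]
  rw [add_comm (q ^ csum (n' + 1))]
  congr 1
  refine Finset.sum_congr (by norm_num) fun i hi => ?_
  rw [Finset.mem_range] at hi
  rw [Nat.add_comm 1 i]
  set m := i + 1 with hm
  have hm1 : 1 ≤ m := by omega
  have hmn : m ≤ n' := by omega
  have hxm0 : x m ≠ 0 := hx0 m hm1 (by omega)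
  have hxm1 : x m ≠ 1 := hx1 m hm1 (by omega)
  have hb := gaussBinom_inv (q := q) hq0 (show m ≤ n' + 1 by omega)
  have hs := ih m (by omega) (by omega) x
    (fun j hj1 hj2 => hx0 j hj1 (by omega)) (fun j hj1 hj2 => hx1 j hj1 (by omega))
  have ht : (x m)⁻¹ * (1 - (x m)⁻¹)⁻¹ = -(1 - x m)⁻¹ := by
    have h1 : (1 : F) - (x m)⁻¹ = -((1 - x m) * (x m)⁻¹) := by
      field_simp
      ring
    rw [h1, inv_neg, mul_inv, inv_inv]
    calc (x m)⁻¹ * -((1 - x m)⁻¹ * x m) = -((x m)⁻¹ * x m * (1 - x m)⁻¹) := by ring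
      _ = -(1 - x m)⁻¹ := by rw [inv_mul_cancel₀ hxm0, one_mul]
  have hcn : q ^ csum (n' + 1) = q ^ csum m * q ^ (m * (n' + 1 - m)) * q ^ csum (n' + 1 - m) := by
    rw [← pow_add, ← pow_add]
    congr 1
    have h2 := csum_add m (n' + 1 - m)
    rw [show m + (n' + 1 - m) = n' + 1 by omega] at h2
    omega
  have hsgn : (-1 : F) ^ (n' + 1 + 1) * (-1 : F) ^ (n' + 1 + 1 + m) = (-1 : F) ^ m := by
    rw [← pow_add, show (n' + 1 + 1) + (n' + 1 + 1 + m) = m + 2 * (n' + 2) by omega,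
      pow_add, pow_mul]
    norm_num
  rw [if_neg (Nat.succ_ne_zero i)]
  calc q ^ csum (n' + 1) *
        (gaussBinom q⁻¹ (n' + 1) m * ((x m)⁻¹ * (1 - (x m)⁻¹)⁻¹) *
          Ssum q⁻¹ (fun j => (x j)⁻¹) m)
      = (q ^ (m * (n' + 1 - m)) * gaussBinom q⁻¹ (n' + 1) m) *
          ((x m)⁻¹ * (1 - (x m)⁻¹)⁻¹) *
          (q ^ csum m * Ssum q⁻¹ (fun j => (x j)⁻¹) m) * q ^ csum (n' + 1 - m) := by
        rw [hcn]
        ring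
    _ = gaussBinom q (n' + 1) m * (-(1 - x m)⁻¹) *
          ((-1 : F) ^ (m + 1) * Ssum q x m) * q ^ csum (n' + 1 - m) := by
        rw [hb, hs, ht]
    _ = (-1 : F) ^ m *
          (q ^ csum (n' + 1 - m) * gaussBinom q (n' + 1) m * ((1 - x m)⁻¹ * Ssum q x m)) := by
        rw [pow_succ (-1 : F) m]
        ring
    _ = (-1 : F) ^ (n' + 1 + 1) *
          ((-1 : F) ^ (n' + 1 + 1 + m) * q ^ csum (n' + 1 - m) * gaussBinom q (n' + 1) m *
            ((1 - x m)⁻¹ * Ssum q x m)) := by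
        rw [← hsgn]
        ring

theorem main {F : Type} [Field F] (X Y : F) (hX0 : X ≠ 0) (hY0 : Y ≠ 0)
    (hX1 : ∀ i, 1 ≤ i → X ^ i ≠ 1) (hXY1 : ∀ a b, 1 ≤ b → X ^ a * Y ^ b ≠ 1)
    (n : ℕ) (hn : 1 ≤ n) :
    Wabelian n X⁻¹ Y⁻¹ = X ^ (n * (2 * n - 1)) * Y ^ (3 * n) * Wabelian n X Y := by
  have hW : ∀ (Z W : F), Wabelian n Z W = (∏ i ∈ Finset.range n, (1 - Z ^ i * W))⁻¹ *
      (1 - Z ^ (n * (2 * n - n)) * W ^ (n + n))⁻¹ *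
      Ssum Z⁻¹ (fun i => Z ^ (i * (2 * n - i)) * W ^ (n + i)) n := fun _ _ => rfl
  rw [hW X⁻¹ Y⁻¹, hW X Y]
  have hfun : (fun i => (X⁻¹) ^ (i * (2 * n - i)) * (Y⁻¹) ^ (n + i))
      = fun i => ((X ^ (i * (2 * n - i)) * Y ^ (n + i) : F))⁻¹ := by
    funext i
    rw [inv_pow, inv_pow, mul_inv]
  rw [hfun, inv_inv]
  have hfe := Ssum_funeq (q := X⁻¹) (inv_ne_zero hX0)
      (fun i hi hcon => hX1 i hi (by rwa [inv_pow, inv_eq_one] at hcon)) n hn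
      (fun i => X ^ (i * (2 * n - i)) * Y ^ (n + i))
      (fun i _ _ => mul_ne_zero (pow_ne_zero _ hX0) (pow_ne_zero _ hY0))
      (fun i _ _ => hXY1 _ _ (by omega))
  rw [inv_inv] at hfe
  have hS : Ssum X (fun i => ((X ^ (i * (2 * n - i)) * Y ^ (n + i) : F))⁻¹) n
      = X ^ csum n * ((-1 : F) ^ (n + 1) *
          Ssum X⁻¹ (fun i => X ^ (i * (2 * n - i)) * Y ^ (n + i)) n) := by
    have hXc : (X : F) ^ csum n * (X⁻¹) ^ csum n = 1 := by
      rw [inv_pow, mul_inv_cancel₀ (pow_ne_zero _ hX0)]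
    calc Ssum X (fun i => ((X ^ (i * (2 * n - i)) * Y ^ (n + i) : F))⁻¹) n
        = (X ^ csum n * (X⁻¹) ^ csum n) *
            Ssum X (fun i => ((X ^ (i * (2 * n - i)) * Y ^ (n + i) : F))⁻¹) n := by
          rw [hXc, one_mul]
      _ = X ^ csum n * ((X⁻¹) ^ csum n *
            Ssum X (fun i => ((X ^ (i * (2 * n - i)) * Y ^ (n + i) : F))⁻¹) n) := by ring
      _ = _ := by rw [hfe]
  rw [hS]
  have hpre : (∏ i ∈ Finset.range n, (1 - (X⁻¹) ^ i * Y⁻¹))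
      = (-1 : F) ^ n * ((X ^ csum n * Y ^ n)⁻¹ * ∏ i ∈ Finset.range n, (1 - X ^ i * Y)) := by
    have hpt : ∀ i ∈ Finset.range n, (1 - (X⁻¹) ^ i * Y⁻¹)
        = (-1) * ((X ^ i * Y)⁻¹ * (1 - X ^ i * Y)) := by
      intro i _
      have ha : (X : F) ^ i * Y ≠ 0 := mul_ne_zero (pow_ne_zero _ hX0) hY0
      rw [inv_pow, ← mul_inv, mul_sub, mul_one, inv_mul_cancel₀ ha]
      ring
    rw [Finset.prod_congr rfl hpt, Finset.prod_mul_distrib, Finset.prod_const,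
      Finset.card_range, Finset.prod_mul_distrib, Finset.prod_inv_distrib,
      Finset.prod_mul_distrib, Finset.prod_pow_eq_pow_sum, Finset.prod_const, Finset.card_range]
    rfl
  have hmid : (1 - (X⁻¹) ^ (n * (2 * n - n)) * (Y⁻¹) ^ (n + n))
      = (-1) * ((X ^ (n * (2 * n - n)) * Y ^ (n + n))⁻¹ *
          (1 - X ^ (n * (2 * n - n)) * Y ^ (n + n))) := by
    have ha : (X : F) ^ (n * (2 * n - n)) * Y ^ (n + n) ≠ 0 :=
      mul_ne_zero (pow_ne_zero _ hX0) (pow_ne_zero _ hY0)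
    rw [inv_pow, inv_pow, ← mul_inv, mul_sub, mul_one, inv_mul_cancel₀ ha]
    ring
  rw [hpre, hmid]
  simp only [mul_inv, inv_inv]
  have hs1 : (((-1 : F)) ^ n)⁻¹ = (-1 : F) ^ n := by
    rw [← inv_pow, inv_neg, inv_one]
  have hs2 : ((-1 : F))⁻¹ = -1 := by
    rw [inv_neg, inv_one]
  rw [hs1, hs2]
  have hsign : (-1 : F) ^ n * (-1) * (-1 : F) ^ (n + 1) = 1 := by
    rw [show ((-1 : F) ^ n * (-1)) = (-1 : F) ^ (n + 1) from (pow_succ (-1 : F) n).symm,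
      ← pow_add, show (n + 1) + (n + 1) = 2 * (n + 1) by omega, pow_mul]
    norm_num
  have hXexp : (X : F) ^ (n * (2 * n - 1)) = X ^ csum n * X ^ csum n * X ^ (n * (2 * n - n)) := by
    rw [← pow_add, ← pow_add]
    congr 1
    obtain ⟨k, rfl⟩ : ∃ k, n = k + 1 := ⟨n - 1, by omega⟩
    have h2c : csum (k + 1) * 2 = (k + 1) * k := by
      have h := Finset.sum_range_id_mul_two (k + 1)
      simpa [csum] using h
    rw [show 2 * (k + 1) - (k + 1) = k + 1 by omega, show 2 * (k + 1) - 1 = 2 * k + 1 by omega]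
    calc (k + 1) * (2 * k + 1) = (k + 1) * k + (k + 1) * (k + 1) := by ring
      _ = csum (k + 1) * 2 + (k + 1) * (k + 1) := by rw [h2c]
      _ = csum (k + 1) + csum (k + 1) + (k + 1) * (k + 1) := by ring
  have hYexp : (Y : F) ^ (3 * n) = Y ^ n * Y ^ (n + n) := by
    rw [← pow_add]
    congr 1
    omega
  rw [hXexp, hYexp]
  calc ((-1 : F) ^ n * (X ^ csum n * Y ^ n *
          (∏ i ∈ Finset.range n, (1 - X ^ i * Y))⁻¹)) *
        (-1 * (X ^ (n * (2 * n - n)) * Y ^ (n + n) *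
          (1 - X ^ (n * (2 * n - n)) * Y ^ (n + n))⁻¹)) *
        (X ^ csum n * ((-1 : F) ^ (n + 1) *
          Ssum X⁻¹ (fun i => X ^ (i * (2 * n - i)) * Y ^ (n + i)) n))
      = ((-1 : F) ^ n * (-1) * (-1 : F) ^ (n + 1)) *
        ((X ^ csum n * X ^ csum n * X ^ (n * (2 * n - n))) * (Y ^ n * Y ^ (n + n)) *
          ((∏ i ∈ Finset.range n, (1 - X ^ i * Y))⁻¹ *
            (1 - X ^ (n * (2 * n - n)) * Y ^ (n + n))⁻¹ *
            Ssum X⁻¹ (fun i => X ^ (i * (2 * n - i)) * Y ^ (n + i)) n)) := by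
        ring
    _ = X ^ csum n * X ^ csum n * X ^ (n * (2 * n - n)) * (Y ^ n * Y ^ (n + n)) *
        ((∏ i ∈ Finset.range n, (1 - X ^ i * Y))⁻¹ *
          (1 - X ^ (n * (2 * n - n)) * Y ^ (n + n))⁻¹ *
          Ssum X⁻¹ (fun i => X ^ (i * (2 * n - i)) * Y ^ (n + i)) n) := by
        rw [hsign, one_mul]
    _ = _ := by ring

end WFEaux

/-- the functional equation
`W_n(X⁻¹,Y⁻¹) = X^{n(2n−1)} Y^{3n} W_n(X,Y)` in `ℚ(X,Y)`. -/
theorem Wabelian_inv_funeq (n : ℕ) (hn : 1 ≤ n) :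
    letI K := FractionRing (MvPolynomial (Fin 2) ℚ)
    letI Xv : K := algebraMap (MvPolynomial (Fin 2) ℚ) K (MvPolynomial.X 0)
    letI Yv : K := algebraMap (MvPolynomial (Fin 2) ℚ) K (MvPolynomial.X 1)
    Wabelian n Xv⁻¹ Yv⁻¹ = Xv ^ (n * (2 * n - 1)) * Yv ^ (3 * n) * Wabelian n Xv Yv := by
  set R := MvPolynomial (Fin 2) ℚ
  set K := FractionRing R
  have hinj : Function.Injective (algebraMap R K) := IsFractionRing.injective R K
  have hpoly : ∀ (a b : ℕ), 1 ≤ a + b →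
      ((MvPolynomial.X 0 : R) ^ a * (MvPolynomial.X 1 : R) ^ b) ≠ 1 := by
    intro a b hab hcon
    have h := congrArg (MvPolynomial.eval (fun _ => (0 : ℚ))) hcon
    rw [map_mul, map_pow, map_pow, MvPolynomial.eval_X, MvPolynomial.eval_X, map_one] at h
    rcases Nat.lt_or_ge 0 a with ha | ha
    · rw [zero_pow (by omega : a ≠ 0)] at h
      simp at h
    · rw [zero_pow (by omega : b ≠ 0), mul_zero] at h
      exact zero_ne_one h
  have hK : ∀ (a b : ℕ), 1 ≤ a + b →
      (algebraMap R K (MvPolynomial.X 0)) ^ a * (algebraMap R K (MvPolynomial.X 1)) ^ b ≠ 1 := by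
    intro a b hab hcon
    apply hpoly a b hab
    apply hinj
    rw [map_mul, map_pow, map_pow, map_one]
    exact hcon
  have hX0 : (algebraMap R K (MvPolynomial.X 0)) ≠ 0 := by
    rw [map_ne_zero_iff _ hinj]
    exact MvPolynomial.X_ne_zero 0
  have hY0 : (algebraMap R K (MvPolynomial.X 1)) ≠ 0 := by
    rw [map_ne_zero_iff _ hinj]
    exact MvPolynomial.X_ne_zero 1
  have hX1 : ∀ i, 1 ≤ i → (algebraMap R K (MvPolynomial.X 0)) ^ i ≠ 1 := by
    intro i hi hcon
    apply hK i 0 (by omega)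
    rw [pow_zero, mul_one]
    exact hcon
  have hXY1 : ∀ a b, 1 ≤ b →
      (algebraMap R K (MvPolynomial.X 0)) ^ a * (algebraMap R K (MvPolynomial.X 1)) ^ b ≠ 1 :=
    fun a b hb => hK a b (by omega)
  exact WFEaux.main _ _ hX0 hY0 hX1 hXY1 n hn
end
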